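/- Consider the tetrahedron with vertices A = (0,0,0), B = (2,0,0), C = (1,1,0), D = (3,2,1) in ℝ³, and let s = s_a ∘ s_d ∘ s_c ∘ s_b be the composition of the orthogonal affine reflections across the planes of the faces opposite a = A, b = B, c = C, d = D. Then the unique point x of the affine plane spanned by {B, C, D} (the plane x₁ + x₂ − 3x₃ = 2) such that s(x) − x is a scalar multiple of (9, 4, 8) is the point m = (22/161, 6/23, −86/161); since the third coordinate of m is negative while every point of the triangle BCD has third coordinate in [0,1], m does not belong to the convex hull of {B, C, D}. -/

import Mathlib

noncomputable section

/-- The orthogonal affine reflection of `ℝ³` across the affine plane spanned by three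
points `p, q, r`. -/
def faceRefl (p q r : EuclideanSpace ℝ (Fin 3)) :
    EuclideanSpace ℝ (Fin 3) ≃ᵃⁱ[ℝ] EuclideanSpace ℝ (Fin 3) :=
  EuclideanGeometry.reflection (affineSpan ℝ {p, q, r})

local notation "E3" => EuclideanSpace ℝ (Fin 3)

private lemma inner3 (x y : E3) : (inner ℝ x y : ℝ) = x 0 * y 0 + x 1 * y 1 + x 2 * y 2 := by
  simp [PiLp.inner_apply, Fin.sum_univ_three]; ring

private lemma inner_vectorSpan_eq_zero {p q r n : E3} {d : ℝ}
    (hp : (inner ℝ p n : ℝ) = d) (hq : (inner ℝ q n : ℝ) = d) (hr : (inner ℝ r n : ℝ) = d) :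
    ∀ v ∈ vectorSpan ℝ ({p, q, r} : Set E3), (inner ℝ v n : ℝ) = 0 := by
  intro v hv
  rw [vectorSpan_def] at hv
  induction hv using Submodule.span_induction with
  | mem w hw =>
    obtain ⟨a, ha, b, hb, rfl⟩ := hw
    simp only [Set.mem_insert_iff, Set.mem_singleton_iff] at ha hb
    rcases ha with rfl | rfl | rfl <;> rcases hb with rfl | rfl | rfl <;>
      · simp only [vsub_eq_sub, inner_sub_left]; linarith
  | zero => simp
  | add a b _ _ ha hb => rw [inner_add_left, ha, hb]; ring
  | smul c a _ ha => rw [real_inner_smul_left, ha]; ring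

private lemma faceRefl_apply_eq {p q r n : E3} {d : ℝ} (x : E3) (c : ℝ)
    (hp : (inner ℝ p n : ℝ) = d) (hq : (inner ℝ q n : ℝ) = d) (hr : (inner ℝ r n : ℝ) = d)
    (hmem : x - c • n ∈ affineSpan ℝ ({p, q, r} : Set E3)) :
    faceRefl p q r x = x - (2 * c) • n := by
  have h1 : (x - c • n) ∈ ((affineSpan ℝ ({p, q, r} : Set E3) : Set E3) ∩
      AffineSubspace.mk' x (affineSpan ℝ ({p, q, r} : Set E3)).directionᗮ) := by
    refine ⟨hmem, ?_⟩
    rw [AffineSubspace.mem_coe, AffineSubspace.mem_mk', Submodule.mem_orthogonal]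
    intro u hu
    have hsub : (x - c • n) -ᵥ x = -(c • n) := by
      show (x - c • n) - x = -(c • n); module
    rw [hsub, inner_neg_right, real_inner_smul_right,
      inner_vectorSpan_eq_zero hp hq hr u (by rwa [direction_affineSpan] at hu)]
    ring
  rw [EuclideanGeometry.inter_eq_singleton_orthogonalProjection] at h1
  have hproj : (EuclideanGeometry.orthogonalProjection (affineSpan ℝ ({p, q, r} : Set E3)) x : E3)
      = x - c • n := h1.symm
  show EuclideanGeometry.reflection _ x = _
  rw [EuclideanGeometry.reflection_apply', hproj]
  show (x - c • n - x) + (x - c • n) = x - (2 * c) • n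
  module

private lemma mem_span3 {p q r : E3} (y : E3) (t u : ℝ)
    (h : y = (t • (q - p) + u • (r - p)) +ᵥ p) : y ∈ affineSpan ℝ ({p, q, r} : Set E3) := by
  have hp : p ∈ affineSpan ℝ ({p, q, r} : Set E3) := mem_affineSpan ℝ (by simp)
  have hq : q ∈ affineSpan ℝ ({p, q, r} : Set E3) := mem_affineSpan ℝ (by simp)
  have hr : r ∈ affineSpan ℝ ({p, q, r} : Set E3) := mem_affineSpan ℝ (by simp)
  rw [h]
  exact AffineSubspace.vadd_mem_of_mem_direction
    (Submodule.add_mem _ (Submodule.smul_mem _ _ (AffineSubspace.vsub_mem_direction hq hp))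
      (Submodule.smul_mem _ _ (AffineSubspace.vsub_mem_direction hr hp))) hp

private lemma mem_planeBCD (y : E3) (hy : y 0 + y 1 - 3 * y 2 = 2) :
    y ∈ affineSpan ℝ ({!₂[2,0,0], !₂[1,1,0], !₂[3,2,1]} : Set E3) :=
  mem_span3 y (y 1 - 2 * y 2) (y 2) (by ext i; fin_cases i <;> simp <;> linarith)

private lemma mem_planeACD (y : E3) (hy : y 0 - y 1 - y 2 = 0) :
    y ∈ affineSpan ℝ ({!₂[0,0,0], !₂[1,1,0], !₂[3,2,1]} : Set E3) :=
  mem_span3 y (y 1 - 2 * y 2) (y 2) (by ext i; fin_cases i <;> simp <;> linarith)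

private lemma mem_planeABD (y : E3) (hy : y 1 - 2 * y 2 = 0) :
    y ∈ affineSpan ℝ ({!₂[0,0,0], !₂[2,0,0], !₂[3,2,1]} : Set E3) :=
  mem_span3 y ((y 0 - 3 * y 2) / 2) (y 2) (by ext i; fin_cases i <;> simp <;> linarith)

private lemma mem_planeABC (y : E3) (hy : y 2 = 0) :
    y ∈ affineSpan ℝ ({!₂[0,0,0], !₂[2,0,0], !₂[1,1,0]} : Set E3) :=
  mem_span3 y ((y 0 - y 1) / 2) (y 1) (by ext i; fin_cases i <;> simp <;> linarith)

private lemma sb_apply (x : E3) : faceRefl !₂[0,0,0] !₂[1,1,0] !₂[3,2,1] x =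
    !₂[x 0 - 2 * ((x 0 - x 1 - x 2) / 3), x 1 + 2 * ((x 0 - x 1 - x 2) / 3),
      x 2 + 2 * ((x 0 - x 1 - x 2) / 3)] := by
  rw [faceRefl_apply_eq (n := !₂[1,-1,-1]) (d := 0) x ((x 0 - x 1 - x 2) / 3)
    (by rw [inner3]; norm_num [Matrix.cons_val_two, Matrix.tail_cons, Matrix.head_cons]) (by rw [inner3]; norm_num [Matrix.cons_val_two, Matrix.tail_cons, Matrix.head_cons]) (by rw [inner3]; norm_num [Matrix.cons_val_two, Matrix.tail_cons, Matrix.head_cons])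
    (mem_planeACD _ (by simp; ring))]
  ext i; fin_cases i <;> simp <;> ring

private lemma sc_apply (x : E3) : faceRefl !₂[0,0,0] !₂[2,0,0] !₂[3,2,1] x =
    !₂[x 0, x 1 - 2 * ((x 1 - 2 * x 2) / 5), x 2 + 4 * ((x 1 - 2 * x 2) / 5)] := by
  rw [faceRefl_apply_eq (n := !₂[0,1,-2]) (d := 0) x ((x 1 - 2 * x 2) / 5)
    (by rw [inner3]; norm_num [Matrix.cons_val_two, Matrix.tail_cons, Matrix.head_cons]) (by rw [inner3]; norm_num [Matrix.cons_val_two, Matrix.tail_cons, Matrix.head_cons]) (by rw [inner3]; norm_num [Matrix.cons_val_two, Matrix.tail_cons, Matrix.head_cons])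
    (mem_planeABD _ (by simp; ring))]
  ext i; fin_cases i <;> simp <;> ring

private lemma sd_apply (x : E3) : faceRefl !₂[0,0,0] !₂[2,0,0] !₂[1,1,0] x =
    !₂[x 0, x 1, -(x 2)] := by
  rw [faceRefl_apply_eq (n := !₂[0,0,1]) (d := 0) x (x 2)
    (by rw [inner3]; norm_num [Matrix.cons_val_two, Matrix.tail_cons, Matrix.head_cons]) (by rw [inner3]; norm_num [Matrix.cons_val_two, Matrix.tail_cons, Matrix.head_cons]) (by rw [inner3]; norm_num [Matrix.cons_val_two, Matrix.tail_cons, Matrix.head_cons])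
    (mem_planeABC _ (by simp))]
  ext i; fin_cases i <;> simp <;> ring

private lemma sa_apply (x : E3) : faceRefl !₂[2,0,0] !₂[1,1,0] !₂[3,2,1] x =
    !₂[x 0 - 2 * ((x 0 + x 1 - 3 * x 2 - 2) / 11), x 1 - 2 * ((x 0 + x 1 - 3 * x 2 - 2) / 11),
      x 2 + 6 * ((x 0 + x 1 - 3 * x 2 - 2) / 11)] := by
  rw [faceRefl_apply_eq (n := !₂[1,1,-3]) (d := 2) x ((x 0 + x 1 - 3 * x 2 - 2) / 11)
    (by rw [inner3]; norm_num [Matrix.cons_val_two, Matrix.tail_cons, Matrix.head_cons]) (by rw [inner3]; norm_num [Matrix.cons_val_two, Matrix.tail_cons, Matrix.head_cons]) (by rw [inner3]; norm_num [Matrix.cons_val_two, Matrix.tail_cons, Matrix.head_cons])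
    (mem_planeBCD _ (by simp; ring))]
  ext i; fin_cases i <;> simp <;> ring

private lemma s_formula (x : E3) :
    faceRefl !₂[2,0,0] !₂[1,1,0] !₂[3,2,1]
      (faceRefl !₂[0,0,0] !₂[2,0,0] !₂[1,1,0]
        (faceRefl !₂[0,0,0] !₂[2,0,0] !₂[3,2,1]
          (faceRefl !₂[0,0,0] !₂[1,1,0] !₂[3,2,1] x))) =
    !₂[x 0 / 33 + 8 * x 1 / 33 + 32 * x 2 / 33 + 4 / 11,
      104 * x 0 / 165 - 25 * x 1 / 33 + 28 * x 2 / 165 + 4 / 11,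
      128 * x 0 / 165 + 20 * x 1 / 33 - 29 * x 2 / 165 - 12 / 11] := by
  rw [sb_apply, sc_apply, sd_apply, sa_apply]
  ext i; fin_cases i <;> simp <;> ring

private def vA : E3 := !₂[0, 0, 0]
private def vB : E3 := !₂[2, 0, 0]
private def vC : E3 := !₂[1, 1, 0]
private def vD : E3 := !₂[3, 2, 1]
private def vu : E3 := !₂[9, 4, 8]
private def vm : E3 := !₂[22 / 161, 6 / 23, -86 / 161]
private def sMap : E3 ≃ᵃⁱ[ℝ] E3 :=
  (((faceRefl vA vC vD).trans (faceRefl vA vB vD)).trans (faceRefl vA vB vC)).trans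
    (faceRefl vB vC vD)

private lemma main :
    (affineSpan ℝ ({vB, vC, vD} : Set E3) : Set E3) =
      {x : E3 | x 0 + x 1 - 3 * x 2 = 2} ∧
    vm ∈ affineSpan ℝ ({vB, vC, vD} : Set E3) ∧
    (∃ k : ℝ, sMap vm - vm = k • vu) ∧
    (∀ x ∈ affineSpan ℝ ({vB, vC, vD} : Set E3),
      (∃ k : ℝ, sMap x - x = k • vu) → x = vm) ∧
    vm 2 < 0 ∧
    (∀ x ∈ convexHull ℝ ({vB, vC, vD} : Set E3), x 2 ∈ Set.Icc (0 : ℝ) 1) ∧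
    vm ∉ convexHull ℝ ({vB, vC, vD} : Set E3) := by
  have hm0 : vm 0 = 22 / 161 := rfl
  have hm1 : vm 1 = 6 / 23 := rfl
  have hm2 : vm 2 = -86 / 161 := rfl
  have hsf : ∀ x : E3, sMap x =
      !₂[x 0 / 33 + 8 * x 1 / 33 + 32 * x 2 / 33 + 4 / 11,
        104 * x 0 / 165 - 25 * x 1 / 33 + 28 * x 2 / 165 + 4 / 11,
        128 * x 0 / 165 + 20 * x 1 / 33 - 29 * x 2 / 165 - 12 / 11] :=
    fun x => s_formula x
  have hspan : (affineSpan ℝ ({vB, vC, vD} : Set E3) : Set E3) =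
      {x : E3 | x 0 + x 1 - 3 * x 2 = 2} := by
    ext x
    constructor
    · intro hx
      refine affineSpan_induction hx ?_ ?_
      · intro y hy
        simp only [Set.mem_insert_iff, Set.mem_singleton_iff] at hy
        rcases hy with rfl | rfl | rfl <;>
          · simp only [Set.mem_setOf_eq, vB, vC, vD]; norm_num [Matrix.cons_val_two, Matrix.tail_cons, Matrix.head_cons]
      · intro c u' v' w' hu hv hw
        simp only [Set.mem_setOf_eq] at hu hv hw ⊢
        have hi : ∀ i : Fin 3, (c • (u' -ᵥ v') +ᵥ w') i = c * (u' i - v' i) + w' i :=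
          fun i => rfl
        rw [hi, hi, hi]
        linear_combination c * hu - c * hv + hw
    · intro hx
      exact mem_planeBCD x hx
  have hull_bound : ∀ x ∈ convexHull ℝ ({vB, vC, vD} : Set E3),
      x 2 ∈ Set.Icc (0 : ℝ) 1 := by
    have hconv : Convex ℝ {x : E3 | x 2 ∈ Set.Icc (0 : ℝ) 1} := by
      intro x hx y hy a b ha hb hab
      simp only [Set.mem_setOf_eq, Set.mem_Icc] at hx hy ⊢
      have h2 : (a • x + b • y) 2 = a * x 2 + b * y 2 := rfl
      rw [h2]
      constructor
      · nlinarith [hx.1, hy.1]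
      · nlinarith [hx.2, hy.2]
    intro x hx
    refine convexHull_min ?_ hconv hx
    intro y hy
    simp only [Set.mem_insert_iff, Set.mem_singleton_iff] at hy
    rcases hy with rfl | rfl | rfl <;>
      · simp only [Set.mem_setOf_eq, vB, vC, vD]; norm_num [Matrix.cons_val_two, Matrix.tail_cons, Matrix.head_cons]
  refine ⟨hspan, mem_planeBCD _ (by rw [hm0, hm1, hm2]; norm_num), ?_, ?_,
    by rw [hm2]; norm_num, hull_bound, ?_⟩
  · refine ⟨-4 / 161, ?_⟩
    rw [hsf vm, hm0, hm1, hm2]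
    ext i
    fin_cases i <;> · simp [vm, vu]; norm_num
  · rintro x hx ⟨k, hk⟩
    have hxp : x 0 + x 1 - 3 * x 2 = 2 := by
      have h : x ∈ (affineSpan ℝ ({vB, vC, vD} : Set E3) : Set E3) := hx
      rw [hspan] at h
      exact h
    rw [hsf x] at hk
    have h0 : (x 0 / 33 + 8 * x 1 / 33 + 32 * x 2 / 33 + 4 / 11) - x 0 = k * 9 := by
      have h := congrArg (· 0) hk; simpa [vu] using h
    have h1 : (104 * x 0 / 165 - 25 * x 1 / 33 + 28 * x 2 / 165 + 4 / 11) - x 1 = k * 4 := by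
      have h := congrArg (· 1) hk; simpa [vu] using h
    have h2 : (128 * x 0 / 165 + 20 * x 1 / 33 - 29 * x 2 / 165 - 12 / 11) - x 2 = k * 8 := by
      have h := congrArg (· 2) hk; simpa [vu] using h
    ext i
    fin_cases i
    · show x 0 = vm 0
      rw [hm0]; linarith
    · show x 1 = vm 1
      rw [hm1]; linarith
    · show x 2 = vm 2
      rw [hm2]; linarith
  · intro hmem
    have h := (hull_bound _ hmem).1
    rw [hm2] at h
    norm_num at h

theorem obtuse_tetrahedron_no_fagnano_orbit :
    let A : EuclideanSpace ℝ (Fin 3) := !₂[0, 0, 0]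
    let B : EuclideanSpace ℝ (Fin 3) := !₂[2, 0, 0]
    let C : EuclideanSpace ℝ (Fin 3) := !₂[1, 1, 0]
    let D : EuclideanSpace ℝ (Fin 3) := !₂[3, 2, 1]
    let s : EuclideanSpace ℝ (Fin 3) ≃ᵃⁱ[ℝ] EuclideanSpace ℝ (Fin 3) :=
      (((faceRefl A C D).trans (faceRefl A B D)).trans (faceRefl A B C)).trans
        (faceRefl B C D)
    let u : EuclideanSpace ℝ (Fin 3) := !₂[9, 4, 8]
    let m : EuclideanSpace ℝ (Fin 3) := !₂[22 / 161, 6 / 23, -86 / 161]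
    (affineSpan ℝ ({B, C, D} : Set (EuclideanSpace ℝ (Fin 3))) : Set (EuclideanSpace ℝ (Fin 3))) =
      {x : EuclideanSpace ℝ (Fin 3) | x 0 + x 1 - 3 * x 2 = 2} ∧
    m ∈ affineSpan ℝ ({B, C, D} : Set (EuclideanSpace ℝ (Fin 3))) ∧
    (∃ k : ℝ, s m - m = k • u) ∧
    (∀ x ∈ affineSpan ℝ ({B, C, D} : Set (EuclideanSpace ℝ (Fin 3))),
      (∃ k : ℝ, s x - x = k • u) → x = m) ∧
    m 2 < 0 ∧
    (∀ x ∈ convexHull ℝ ({B, C, D} : Set (EuclideanSpace ℝ (Fin 3))),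
      x 2 ∈ Set.Icc (0 : ℝ) 1) ∧
    m ∉ convexHull ℝ ({B, C, D} : Set (EuclideanSpace ℝ (Fin 3))) := by
  exact main
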